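/- There exist a finite set G of goods and a finite set of agents with additive valuations over G such that there is no partition of the agents into two groups whose sizes differ by at most one together with an allocation (B₁, B₂) of G to the two groups that is EFX for every agent. (An explicit instance has six agents and three goods.) -/
import Mathlib

open Finset

variable {γ : Type*} [DecidableEq γ]

/-- An allocation is EFX (envy-free up to any positively valued good) for an agent with
valuation `u` whose group receives `mine`, the other group receiving `other`. -/
def EFX (u : Finset γ → ℝ) (mine other : Finset γ) : Prop :=
  ∀ g ∈ other, 0 < u {g} → u (other \ {g}) ≤ u mine

/-- A valuation is additive if the value of a set is the sum of values of its singletons. -/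
def AdditiveVal (u : Finset γ → ℝ) : Prop :=
  ∀ S : Finset γ, u S = ∑ g ∈ S, u {g}

/-- Natural-number weight: agent `j` values good `j % 3` at 3 and other goods at 1. -/
def W (j : Fin 6) (S : Finset (Fin 3)) : ℕ :=
  ∑ g ∈ S, (if (g : ℕ) = (j : ℕ) % 3 then 3 else 1)

lemma key : ∀ A₁ : Finset (Fin 6), |(A₁.card : ℤ) - (A₁ᶜ.card : ℤ)| ≤ 1 →
    ∀ B₁ : Finset (Fin 3),
      ¬ ((∀ j ∈ A₁, ∀ g ∈ B₁ᶜ, W j (B₁ᶜ \ {g}) ≤ W j B₁) ∧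
         (∀ j ∈ A₁ᶜ, ∀ g ∈ B₁, W j (B₁ \ {g}) ≤ W j B₁ᶜ)) := by decide

/-- There is an instance (six agents, three goods, additive valuations) such that no
balanced partition of the agents into two groups admits an EFX allocation. -/
theorem no_balanced_partition_EFX :
    ∃ (m n : ℕ) (u : Fin n → Finset (Fin m) → ℝ),
      (∀ j, AdditiveVal (u j)) ∧ (∀ j S, 0 ≤ u j S) ∧
      ∀ A₁ A₂ : Finset (Fin n), Disjoint A₁ A₂ → A₁ ∪ A₂ = Finset.univ →
        |(A₁.card : ℤ) - (A₂.card : ℤ)| ≤ 1 →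
        ∀ B₁ B₂ : Finset (Fin m), Disjoint B₁ B₂ → B₁ ∪ B₂ = Finset.univ →
          ¬ ((∀ j ∈ A₁, EFX (u j) B₁ B₂) ∧ (∀ j ∈ A₂, EFX (u j) B₂ B₁)) := by
  refine ⟨3, 6, fun j S => (W j S : ℝ), ?_, ?_, ?_⟩
  · intro j S
    simp [AdditiveVal, W, Nat.cast_sum]
  · intro j S
    positivity
  · intro A₁ A₂ hd hu hc B₁ B₂ hd' hu' ⟨h1, h2⟩
    have hA : A₂ = A₁ᶜ := by
      have : IsCompl A₁ A₂ := ⟨hd, codisjoint_iff.mpr hu⟩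
      exact this.symm.eq_compl
    have hB : B₂ = B₁ᶜ := by
      have : IsCompl B₁ B₂ := ⟨hd', codisjoint_iff.mpr hu'⟩
      exact this.symm.eq_compl
    subst hA hB
    have hpos : ∀ (j : Fin 6) (g : Fin 3), (0 : ℝ) < (W j {g} : ℝ) := by
      intro j g
      have : 0 < W j {g} := by
        simp only [W, Finset.sum_singleton]
        split <;> norm_num
      exact_mod_cast this
    refine key A₁ hc B₁ ⟨?_, ?_⟩
    · intro j hj g hg
      have : (W j (B₁ᶜ \ {g}) : ℝ) ≤ (W j B₁ : ℝ) := h1 j hj g hg (hpos j g)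
      exact_mod_cast this
    · intro j hj g hg
      have : (W j (B₁ \ {g}) : ℝ) ≤ (W j B₁ᶜ : ℝ) := h2 j hj g hg (hpos j g)
      exact_mod_cast this
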